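/- Every rotation of the quaternions is a two-sided multiplication: if f : ℍ ≃ₗᵢ[ℝ] ℍ is a real-linear isometric equivalence of the real quaternions with itself whose determinant (as a linear map on the 4-dimensional real vector space ℍ) equals 1, then there exist quaternions q_L and q_R with ‖q_L‖ = 1 and ‖q_R‖ = 1 such that f x = q_L * x * q_R for all x ∈ ℍ. -/

import Mathlib

open Quaternion

noncomputable abbrev qb : Module.Basis (Fin 4) ℝ ℍ[ℝ] := QuaternionAlgebra.basisOneIJK (-1) 0 (-1)

noncomputable def qmk (a b c d : ℝ) : ℍ[ℝ] := ⟨a, b, c, d⟩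
@[simp] lemma qmk_re (a b c d : ℝ) : (qmk a b c d).re = a := rfl
@[simp] lemma qmk_imI (a b c d : ℝ) : (qmk a b c d).imI = b := rfl
@[simp] lemma qmk_imJ (a b c d : ℝ) : (qmk a b c d).imJ = c := rfl
@[simp] lemma qmk_imK (a b c d : ℝ) : (qmk a b c d).imK = d := rfl

noncomputable def qi : ℍ[ℝ] := qmk 0 1 0 0
noncomputable def qj : ℍ[ℝ] := qmk 0 0 1 0
noncomputable def qk : ℍ[ℝ] := qmk 0 0 0 1

lemma qb_vec : ∀ m : Fin 4, qb m = ![(1:ℍ[ℝ]), qi, qj, qk] m := by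
  intro m
  apply qb.repr.injective
  ext x
  rw [Module.Basis.repr_self]
  rw [show ((qb.repr) (![(1:ℍ[ℝ]), qi, qj, qk] m)) x
      = ![(![(1:ℍ[ℝ]), qi, qj, qk] m).re, _, _, _] x from
      congrFun (QuaternionAlgebra.coe_basisOneIJK_repr (-1) 0 (-1) _) x]
  fin_cases m <;> fin_cases x <;> simp [qi, qj, qk]

lemma toMatrix_qb (T : ℍ[ℝ] →ₗ[ℝ] ℍ[ℝ]) :
    LinearMap.toMatrix qb qb T =
      !![(T 1).re, (T qi).re, (T qj).re, (T qk).re;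
         (T 1).imI, (T qi).imI, (T qj).imI, (T qk).imI;
         (T 1).imJ, (T qi).imJ, (T qj).imJ, (T qk).imJ;
         (T 1).imK, (T qi).imK, (T qj).imK, (T qk).imK] := by
  ext i j
  rw [LinearMap.toMatrix_apply, qb_vec j]
  fin_cases i <;> fin_cases j <;> rfl

lemma det_fin4 (M : Matrix (Fin 4) (Fin 4) ℝ) : M.det =
    M 0 0 * (M 1 1 * (M 2 2 * M 3 3 - M 2 3 * M 3 2) - M 1 2 * (M 2 1 * M 3 3 - M 2 3 * M 3 1) + M 1 3 * (M 2 1 * M 3 2 - M 2 2 * M 3 1))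
  - M 0 1 * (M 1 0 * (M 2 2 * M 3 3 - M 2 3 * M 3 2) - M 1 2 * (M 2 0 * M 3 3 - M 2 3 * M 3 0) + M 1 3 * (M 2 0 * M 3 2 - M 2 2 * M 3 0))
  + M 0 2 * (M 1 0 * (M 2 1 * M 3 3 - M 2 3 * M 3 1) - M 1 1 * (M 2 0 * M 3 3 - M 2 3 * M 3 0) + M 1 3 * (M 2 0 * M 3 1 - M 2 1 * M 3 0))
  - M 0 3 * (M 1 0 * (M 2 1 * M 3 2 - M 2 2 * M 3 1) - M 1 1 * (M 2 0 * M 3 2 - M 2 2 * M 3 0) + M 1 2 * (M 2 0 * M 3 1 - M 2 1 * M 3 0)) := by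
  rw [Matrix.det_succ_row_zero]
  simp [Fin.sum_univ_succ, Matrix.det_fin_three,
    show (Fin.succAbove 1 2 : Fin 4) = 3 from rfl, show (Fin.succAbove 2 1 : Fin 4) = 1 from rfl,
    show (Fin.succAbove 2 2 : Fin 4) = 3 from rfl, show (Fin.succAbove 3 1 : Fin 4) = 1 from rfl,
    show (Fin.succAbove 3 2 : Fin 4) = 2 from rfl,
    show (Fin.succ 2 : Fin 4) = 3 from rfl, show (Fin.castSucc 2 : Fin 4) = 2 from rfl]
  ring

lemma det_mulLeft (w : ℍ[ℝ]) : LinearMap.det (LinearMap.mulLeft ℝ w) = normSq w ^ 2 := by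
  rw [← LinearMap.det_toMatrix qb, toMatrix_qb, det_fin4]
  simp only [LinearMap.mulLeft_apply, Quaternion.re_mul, Quaternion.imI_mul, Quaternion.imJ_mul,
    Quaternion.imK_mul, normSq_def', qi, qj, qk]
  simp
  ring

lemma det_mulRight (w : ℍ[ℝ]) : LinearMap.det (LinearMap.mulRight ℝ w) = normSq w ^ 2 := by
  rw [← LinearMap.det_toMatrix qb, toMatrix_qb, det_fin4]
  simp only [LinearMap.mulRight_apply, Quaternion.re_mul, Quaternion.imI_mul, Quaternion.imJ_mul,
    Quaternion.imK_mul, normSq_def', qi, qj, qk]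
  simp
  ring

noncomputable def starLin : ℍ[ℝ] →ₗ[ℝ] ℍ[ℝ] where
  toFun := star
  map_add' := star_add
  map_smul' := fun r x => by simp

lemma det_starLin : LinearMap.det starLin = -1 := by
  rw [← LinearMap.det_toMatrix qb, toMatrix_qb, det_fin4]
  simp [starLin, qi, qj, qk]

lemma hii : qi * qi = -1 := by ext <;> simp [qi]
lemma hjj : qj * qj = -1 := by ext <;> simp [qj]
lemma hkk : qk * qk = -1 := by ext <;> simp [qk]
lemma hij : qi * qj = qk := by ext <;> simp [qi, qj, qk]
lemma hji : qj * qi = -qk := by ext <;> simp [qi, qj, qk]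
lemma hjk : qj * qk = qi := by ext <;> simp [qi, qj, qk]
lemma hkj : qk * qj = -qi := by ext <;> simp [qi, qj, qk]
lemma hki : qk * qi = qj := by ext <;> simp [qi, qj, qk]
lemma hik : qi * qk = -qj := by ext <;> simp [qi, qj, qk]

lemma decomp (x : ℍ[ℝ]) : x = x.re • 1 + x.imI • qi + x.imJ • qj + x.imK • qk := by
  ext <;> simp [qi, qj, qk]

lemma re_mul_comm (x y : ℍ[ℝ]) : (x * y).re = (y * x).re := by
  simp [Quaternion.re_mul]; ring

lemma anticomm (p r : ℍ[ℝ]) (hp : p.re = 0) (hr : r.re = 0) (hpr : (p * r).re = 0) :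
    p * r = -(r * p) := by
  ext
  · simp only [Quaternion.re_mul, Quaternion.re_neg, hp, hr] at hpr ⊢; linarith
  · simp only [Quaternion.imI_mul, Quaternion.imI_neg, hp, hr]; ring
  · simp only [Quaternion.imJ_mul, Quaternion.imJ_neg, hp, hr]; ring
  · simp only [Quaternion.imK_mul, Quaternion.imK_neg, hp, hr]; ring

section Psi
variable (a b : ℍ[ℝ])

/-- The intertwiner candidate. -/
noncomputable def Psi (y : ℍ[ℝ]) : ℍ[ℝ] := y + a*(y*(-qi)) + b*(y*(-qj)) + a*(b*(y*(-qk)))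

variable {a b}
variable (ha : a * a = -1) (hb : b * b = -1) (hab : a * b = -(b * a))

include ha hb hab

lemma haX (x : ℍ[ℝ]) : a * (a * x) = -x := by rw [← mul_assoc, ha]; simp
lemma hbX (x : ℍ[ℝ]) : b * (b * x) = -x := by rw [← mul_assoc, hb]; simp
lemma habX (x : ℍ[ℝ]) : a * (b * x) = -(b * (a * x)) := by
  rw [← mul_assoc, hab]; simp [mul_assoc]

lemma psi_i (y : ℍ[ℝ]) : a * Psi a b y = Psi a b y * qi := by
  simp only [Psi, mul_add, add_mul, mul_assoc, mul_neg, neg_mul, neg_neg,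
    hii, hjj, hij, hji, hjk, hkj, hki, hik, hkk, mul_one, mul_neg_one,
    haX ha hb hab, hbX ha hb hab, habX ha hb hab]
  try abel
  try abel_nf
  try simp only [hii, hjj, hij, hji, hjk, hkj, hki, hik, hkk, mul_neg_one, mul_neg, neg_neg, mul_one,
    smul_neg, neg_smul]
  try abel_nf
  try norm_num
  try abel

lemma psi_j (y : ℍ[ℝ]) : b * Psi a b y = Psi a b y * qj := by
  simp only [Psi, mul_add, add_mul, mul_assoc, mul_neg, neg_mul, neg_neg,
    hii, hjj, hij, hji, hjk, hkj, hki, hik, hkk, mul_one, mul_neg_one,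
    haX ha hb hab, hbX ha hb hab, habX ha hb hab]
  try abel
  try abel_nf
  try simp only [hii, hjj, hij, hji, hjk, hkj, hki, hik, hkk, mul_neg_one, mul_neg, neg_neg, mul_one,
    smul_neg, neg_smul]
  try abel_nf
  try norm_num
  try abel

lemma psi_k (y : ℍ[ℝ]) : (a * b) * Psi a b y = Psi a b y * qk := by
  simp only [Psi, mul_add, add_mul, mul_assoc, mul_neg, neg_mul, neg_neg,
    hii, hjj, hij, hji, hjk, hkj, hki, hik, hkk, mul_one, mul_neg_one,
    haX ha hb hab, hbX ha hb hab, habX ha hb hab]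
  try abel
  try abel_nf
  try simp only [hii, hjj, hij, hji, hjk, hkj, hki, hik, hkk, mul_neg_one, mul_neg, neg_neg, mul_one,
    smul_neg, neg_smul]
  try abel_nf
  try norm_num
  try abel

lemma psi_sum : Psi a b 1 + Psi a b qi * (-qi) + Psi a b qj * (-qj) + Psi a b qk * (-qk) = 4 := by
  simp only [Psi, mul_add, add_mul, mul_assoc, mul_neg, neg_mul, neg_neg, one_mul,
    hii, hjj, hij, hji, hjk, hkj, hki, hik, hkk, mul_one, mul_neg_one]
  try abel
  try abel_nf
  try simp only [hii, hjj, hij, hji, hjk, hkj, hki, hik, hkk, mul_neg_one, mul_neg, neg_neg, mul_one,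
    smul_neg, neg_smul]
  try abel_nf
  try norm_num
  try abel

end Psi

set_option maxHeartbeats 2000000 in
/-- Hurwitz: every rotation of `ℍ ≅ ℝ⁴` (linear isometric equivalence of
determinant 1) is a two-sided multiplication by unit quaternions. -/
theorem so4_eq_two_sided_quaternion_mul (f : ℍ[ℝ] ≃ₗᵢ[ℝ] ℍ[ℝ])
    (hdet : LinearMap.det (f.toLinearEquiv : ℍ[ℝ] →ₗ[ℝ] ℍ[ℝ]) = 1) :
    ∃ qL qR : ℍ[ℝ], ‖qL‖ = 1 ∧ ‖qR‖ = 1 ∧ ∀ x : ℍ[ℝ], f x = qL * x * qR := by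
  set q : ℍ[ℝ] := f 1 with hq_def
  have hqnorm : ‖q‖ = 1 := by rw [hq_def]; rw [f.norm_map 1]; exact norm_one
  have hnq : normSq q = 1 := by rw [normSq_eq_norm_mul_self, hqnorm]; norm_num
  have hsq : star q * q = 1 := by
    rw [Quaternion.star_mul_self, hnq]; exact_mod_cast rfl
  have hqs : q * star q = 1 := by
    rw [Quaternion.self_mul_star, hnq]; exact_mod_cast rfl
  have hinner : ∀ x y : ℍ[ℝ], (f x * star (f y)).re = (x * star y).re := by
    intro x y
    have h := f.inner_map_map x y
    simpa only [Quaternion.inner_def] using h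
  set a : ℍ[ℝ] := star q * f qi with ha_def
  set b : ℍ[ℝ] := star q * f qj with hb_def
  set c : ℍ[ℝ] := star q * f qk with hc_def
  have cyc : ∀ X : ℍ[ℝ], (star q * X * q).re = X.re := by
    intro X
    rw [re_mul_comm, ← mul_assoc, hqs, one_mul]
  have hre_pres : ∀ u v : ℍ[ℝ],
      ((star q * f u) * star (star q * f v)).re = (u * star v).re := by
    intro u v
    have : (star q * f u) * star (star q * f v) = star q * (f u * star (f v)) * q := by
      rw [star_mul, star_star]
      simp [mul_assoc]
    rw [this, cyc, hinner]
  -- component facts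
  have hre1 : ∀ u : ℍ[ℝ], (star q * f u).re = u.re := by
    intro u
    have h := hre_pres u 1
    rw [← hq_def, hsq, star_one, mul_one, mul_one] at h
    exact h
  have hre_a : a.re = 0 := by simpa [ha_def, qi] using hre1 qi
  have hre_b : b.re = 0 := by simpa [hb_def, qj] using hre1 qj
  have hre_c : c.re = 0 := by simpa [hc_def, qk] using hre1 qk
  have hstar_a : star a = -a := by ext <;> simp [hre_a]
  have hstar_b : star b = -b := by ext <;> simp [hre_b]
  have hstar_c : star c = -c := by ext <;> simp [hre_c]
  have hns : ∀ u : ℍ[ℝ], normSq (star q * f u) = normSq u := by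
    intro u
    have h := hre_pres u u
    rw [Quaternion.self_mul_star, Quaternion.self_mul_star] at h
    simpa using h
  have hna : normSq a = 1 := by rw [ha_def, hns]; simp [normSq_def', qi]
  have hnb : normSq b = 1 := by rw [hb_def, hns]; simp [normSq_def', qj]
  have hnc : normSq c = 1 := by rw [hc_def, hns]; simp [normSq_def', qk]
  have sq_neg_one : ∀ p : ℍ[ℝ], star p = -p → normSq p = 1 → p * p = -1 := by
    intro p hsp hnp
    have h := Quaternion.self_mul_star p
    rw [hsp, hnp, mul_neg] at h
    have h2 := congrArg (fun z : ℍ[ℝ] => -z) h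
    simpa using h2
  have ha2 : a * a = -1 := sq_neg_one a hstar_a hna
  have hb2 : b * b = -1 := sq_neg_one b hstar_b hnb
  have hc2 : c * c = -1 := sq_neg_one c hstar_c hnc
  -- pairwise anticommutation
  have hre_pair : ∀ (u v : ℍ[ℝ]), (u * star v).re = 0 →
      ∀ p r : ℍ[ℝ], p = star q * f u → r = star q * f v → p.re = 0 → r.re = 0 →
      p * r = -(r * p) := by
    intro u v huv p r hp hr hpre hrre
    apply anticomm p r hpre hrre
    have h := hre_pres u v
    rw [← hp, ← hr] at h
    have hsr : star r = -r := by ext <;> simp [hrre]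
    rw [hsr, mul_neg] at h
    rw [huv] at h
    have : (p * r).re = -0 := by
      have := congrArg (fun t : ℝ => -t) h
      simpa using this
    simpa using this
  have hab : a * b = -(b * a) := by
    apply hre_pair qi qj ?_ a b ha_def hb_def hre_a hre_b
    simp [qi, qj, Quaternion.re_mul]
  have hac : a * c = -(c * a) := by
    apply hre_pair qi qk ?_ a c ha_def hc_def hre_a hre_c
    simp [qi, qk, Quaternion.re_mul]
  have hbc : b * c = -(c * b) := by
    apply hre_pair qj qk ?_ b c hb_def hc_def hre_b hre_c
    simp [qj, qk, Quaternion.re_mul]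
  -- u = a (b c) squares to 1
  have hbaX : ∀ x : ℍ[ℝ], b * (a * x) = -(a * (b * x)) := by
    intro x
    have : b * a = -(a * b) := by rw [hab]; simp
    rw [← mul_assoc, this, neg_mul, mul_assoc]
  have hcaX : ∀ x : ℍ[ℝ], c * (a * x) = -(a * (c * x)) := by
    intro x
    have : c * a = -(a * c) := by rw [hac]; simp
    rw [← mul_assoc, this, neg_mul, mul_assoc]
  have hcbX : ∀ x : ℍ[ℝ], c * (b * x) = -(b * (c * x)) := by
    intro x
    have : c * b = -(b * c) := by rw [hbc]; simp
    rw [← mul_assoc, this, neg_mul, mul_assoc]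
  have haaX : ∀ x : ℍ[ℝ], a * (a * x) = -x := haX ha2 hb2 hab
  have hbbX : ∀ x : ℍ[ℝ], b * (b * x) = -x := hbX ha2 hb2 hab
  have hccX : ∀ x : ℍ[ℝ], c * (c * x) = -x := by
    intro x; rw [← mul_assoc, hc2]; simp
  have huu : (a * (b * c)) * (a * (b * c)) = 1 := by
    simp only [mul_assoc, hbaX, hcaX, hcbX, haaX, hbbX, hccX, hc2, hb2, ha2,
      mul_neg, neg_mul, neg_neg, mul_one, mul_neg_one, one_mul]
  have hu_cases : a * (b * c) = 1 ∨ a * (b * c) = -1 := by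
    have hfac : (a * (b * c) - 1) * (a * (b * c) + 1) = 0 := by
      have expand : (a * (b * c) - 1) * (a * (b * c) + 1)
          = (a * (b * c)) * (a * (b * c)) - 1 := by noncomm_ring
      rw [expand, huu]; simp
    rcases mul_eq_zero.mp hfac with h | h
    · left; exact sub_eq_zero.mp h
    · right; exact eq_neg_of_add_eq_zero_left h
  have hc_of : ∀ ε : ℍ[ℝ], a*(b*c) = ε → c = b*(a*ε) := by
    intro ε h
    have h1 := congrArg (fun z : ℍ[ℝ] => a * z) h
    simp only [haaX] at h1
    have h2 : b * c = -(a*ε) := by rw [← h1, neg_neg]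
    have h3 := congrArg (fun z : ℍ[ℝ] => b * z) h2
    simp only [hbbX, mul_neg] at h3
    exact neg_inj.mp h3
  -- the nonzero intertwiner r
  have hex : ∃ y, Psi a b y ≠ 0 := by
    by_contra hcon
    push_neg at hcon
    have hs := psi_sum ha2 hb2 hab
    rw [hcon 1, hcon qi, hcon qj, hcon qk] at hs
    have h4 := congrArg QuaternionAlgebra.re hs
    norm_num [show ((4:ℍ[ℝ]).re) = 4 from rfl] at h4
  obtain ⟨y, hy⟩ := hex
  set r : ℍ[ℝ] := Psi a b y with hr_def
  have hra : a * r = r * qi := psi_i ha2 hb2 hab y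
  have hrb : b * r = r * qj := psi_j ha2 hb2 hab y
  have hrk : (a*b) * r = r * qk := psi_k ha2 hb2 hab y
  have hrr : r * r⁻¹ = 1 := mul_inv_cancel₀ hy
  have starLin_apply : ∀ x : ℍ[ℝ], starLin x = star x := fun _ => rfl
  have sqi : star qi = -qi := by ext <;> simp [qi]
  have sqj : star qj = -qj := by ext <;> simp [qj]
  have sqk : star qk = -qk := by ext <;> simp [qk]
  rcases hu_cases with hu | hu
  · -- bad case : c = b * a, determinant is -1, contradiction
    exfalso
    have hc_ba : c = b * a := by simpa using hc_of 1 hu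
    have hB1 : f 1 = q * (r * ((-qk) * (star (1:ℍ[ℝ]) * qk) * r⁻¹)) := by
      rw [star_one, one_mul, show (-qk) * qk = 1 by rw [neg_mul, hkk, neg_neg],
        one_mul, hrr, mul_one, ← hq_def]
    have hBi : f qi = q * (r * ((-qk) * (star qi * qk) * r⁻¹)) := by
      rw [sqi, show (-qk) * (-qi * qk) = qi by
        rw [neg_mul qi, mul_neg, hik, neg_mul_neg, hkj, neg_neg],
        ← mul_assoc r qi r⁻¹, ← hra, mul_assoc a r r⁻¹, hrr, mul_one, ha_def,
        ← mul_assoc q (star q) (f qi), hqs, one_mul]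
    have hBj : f qj = q * (r * ((-qk) * (star qj * qk) * r⁻¹)) := by
      rw [sqj, show (-qk) * (-qj * qk) = qj by
        rw [neg_mul qj, mul_neg, hjk, neg_mul, neg_neg, hki],
        ← mul_assoc r qj r⁻¹, ← hrb, mul_assoc b r r⁻¹, hrr, mul_one, hb_def,
        ← mul_assoc q (star q) (f qj), hqs, one_mul]
    have hBk : f qk = q * (r * ((-qk) * (star qk * qk) * r⁻¹)) := by
      rw [sqk, show (-qk) * (-qk * qk) = -qk by
        rw [neg_mul qk qk, hkk, neg_neg, mul_one],
        neg_mul qk r⁻¹, mul_neg r, ← mul_assoc r qk r⁻¹, ← hrk, mul_assoc (a*b) r r⁻¹, hrr,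
        mul_one, show -(a*b) = c by rw [hab, neg_neg, ← hc_ba],
        hc_def, ← mul_assoc q (star q) (f qk), hqs, one_mul]
    have hF : (f.toLinearEquiv : ℍ[ℝ] →ₗ[ℝ] ℍ[ℝ])
        = LinearMap.mulLeft ℝ q ∘ₗ (LinearMap.mulLeft ℝ r ∘ₗ (LinearMap.mulRight ℝ r⁻¹ ∘ₗ
          (LinearMap.mulLeft ℝ (-qk) ∘ₗ (LinearMap.mulRight ℝ qk ∘ₗ starLin)))) := by
      apply qb.ext
      intro m
      rw [qb_vec m]
      fin_cases m <;>
        simp only [show (⟨0,by norm_num⟩ : Fin 4) = 0 from rfl,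
          show (⟨1,by norm_num⟩ : Fin 4) = 1 from rfl, show (⟨2,by norm_num⟩ : Fin 4) = 2 from rfl,
          show (⟨3,by norm_num⟩ : Fin 4) = 3 from rfl,
          Matrix.cons_val_zero, Matrix.cons_val_one, Matrix.head_cons,
          Matrix.cons_val_two, Matrix.tail_cons, Matrix.cons_val_three,
          LinearMap.coe_comp, Function.comp_apply, LinearMap.mulLeft_apply,
          LinearMap.mulRight_apply, starLin_apply, LinearIsometryEquiv.coe_toLinearEquiv,
          LinearEquiv.coe_coe]
      · exact hB1
      · exact hBi
      · exact hBj
      · exact hBk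
    have hdet2 := hdet
    rw [hF] at hdet2
    simp only [LinearMap.det_comp, det_mulLeft, det_mulRight, det_starLin] at hdet2
    have h1 : normSq (-qk) = 1 := by simp [normSq_def', qk]
    have h2 : normSq qk = 1 := by simp [normSq_def', qk]
    have h3 : normSq r⁻¹ = (normSq r)⁻¹ := map_inv₀ normSq r
    have h4 : normSq r ≠ 0 := normSq_ne_zero.mpr hy
    rw [hnq, h1, h2, h3] at hdet2
    have h5 : (normSq r)^2 * ((normSq r)⁻¹)^2 = 1 := by
      rw [← mul_pow, mul_inv_cancel₀ h4, one_pow]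
    nlinarith [hdet2, h5]
  · -- good case : c = a * b
    have hc_ab : c = a * b := by
      have h := hc_of (-1) hu
      rw [mul_neg, mul_one, mul_neg] at h
      rw [hab]
      exact h
    have hK1 : star q * (f 1 * r) = r * 1 := by
      rw [← hq_def, ← mul_assoc, hsq, one_mul, mul_one]
    have hKi : star q * (f qi * r) = r * qi := by
      rw [← mul_assoc, ← ha_def, hra]
    have hKj : star q * (f qj * r) = r * qj := by
      rw [← mul_assoc, ← hb_def, hrb]
    have hKk : star q * (f qk * r) = r * qk := by
      rw [← mul_assoc, ← hc_def, hc_ab, hrk]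
    have key : ∀ x : ℍ[ℝ], star q * (f x * r) = r * x := by
      intro x
      conv_lhs => rw [decomp x]
      conv_rhs => rw [decomp x]
      rw [map_add, map_add, map_add, map_smul, map_smul, map_smul, map_smul]
      simp only [add_mul, mul_add, smul_mul_assoc, mul_smul_comm]
      rw [hK1, hKi, hKj, hKk]
    have hfx : ∀ x : ℍ[ℝ], f x = q * (r * x) * r⁻¹ := by
      intro x
      have h := congrArg (fun z : ℍ[ℝ] => q * z * r⁻¹) (key x)
      rw [← mul_assoc q, hqs, one_mul, mul_assoc (f x), hrr, mul_one] at h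
      exact h
    have hrn : ‖r‖ ≠ 0 := norm_ne_zero_iff.mpr hy
    refine ⟨‖r‖⁻¹ • (q * r), ‖r‖⁻¹ • star r, ?_, ?_, ?_⟩
    · rw [norm_smul, norm_mul, hqnorm, one_mul, norm_inv, norm_norm]
      exact inv_mul_cancel₀ hrn
    · rw [norm_smul, Quaternion.norm_star, norm_inv, norm_norm]
      exact inv_mul_cancel₀ hrn
    · intro x
      rw [hfx x, Quaternion.inv_def]
      simp only [smul_mul_assoc, mul_smul_comm, smul_smul, mul_assoc,
        normSq_eq_norm_mul_self, mul_inv]
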